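/- arXiv:1804.00779 — 2 statements merged into one kernel-verified Lean document; each statement's English description precedes it below -/
import Mathlib

section
/- Superimposed sigmoids universally approximate monotonic functions: Let S : [r_0, r_1] → [0,1] be continuous and strictly increasing with S(r_0) = 0, S(r_1) = 1. For any ε > 0, there exist a positive integer n, weights w_j > 0 with Σ w_j = 1, points b_j in [r_0, r_1], and bounded positive scale parameters τ_j such that |Σ_{j=1}^n w_j σ((x - b_j)/τ_j) - S(x)| < ε for all x in (r_0, r_1), where σ is the logistic sigmoid. -/
noncomputable def logisticSigmoid (z : ℝ) : ℝ := 1 / (1 + Real.exp (-z))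

lemma sig_pos (z : ℝ) : 0 < logisticSigmoid z := by
  unfold logisticSigmoid; positivity

lemma sig_lt_one (z : ℝ) : logisticSigmoid z < 1 := by
  unfold logisticSigmoid
  rw [div_lt_one (by positivity)]
  linarith [Real.exp_pos (-z)]

lemma sig_le_exp (z : ℝ) : logisticSigmoid z ≤ Real.exp z := by
  unfold logisticSigmoid
  rw [div_le_iff₀ (by positivity)]
  have h : Real.exp z * Real.exp (-z) = 1 := by rw [← Real.exp_add]; simp
  nlinarith [Real.exp_pos z, Real.exp_pos (-z)]

lemma one_sub_sig_le (z : ℝ) : 1 - logisticSigmoid z ≤ Real.exp (-z) := by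
  have h := Real.exp_pos (-z)
  have h1 : 1 - logisticSigmoid z = Real.exp (-z) / (1 + Real.exp (-z)) := by
    unfold logisticSigmoid; field_simp; ring
  rw [h1]
  exact div_le_self h.le (by linarith)

set_option maxHeartbeats 2000000 in
/-- Superimposed sigmoids universally approximate continuous strictly increasing
CDF-like functions on an interval. -/
theorem stmt_3 (r0 r1 : ℝ) (hr : r0 < r1) (S : ℝ → ℝ)
    (hScont : ContinuousOn S (Set.Icc r0 r1))
    (hSmono : StrictMonoOn S (Set.Icc r0 r1))
    (hS0 : S r0 = 0) (hS1 : S r1 = 1)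
    (ε : ℝ) (hε : 0 < ε) :
    ∃ (n : ℕ), 0 < n ∧ ∃ (w b τ : Fin n → ℝ),
      (∀ j, 0 < w j) ∧ (∑ j, w j = 1) ∧ (∀ j, b j ∈ Set.Icc r0 r1) ∧
      (∀ j, 0 < τ j) ∧ (∃ B : ℝ, ∀ j, τ j ≤ B) ∧
      ∀ x ∈ Set.Ioo r0 r1,
        |(∑ j, w j * logisticSigmoid ((x - b j) / τ j)) - S x| < ε := by
  obtain ⟨n, hn⟩ := exists_nat_gt (5 / ε)
  have hn0 : 0 < n := by
    have h1 : (0:ℝ) < 5 / ε := by positivity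
    have : (0:ℝ) < (n:ℝ) := h1.trans hn
    exact_mod_cast this
  have hnR : (0:ℝ) < (n:ℝ) := by exact_mod_cast hn0
  have h5n : 5 / (n:ℝ) < ε := by
    rw [div_lt_iff₀ hnR]
    rw [div_lt_iff₀ hε] at hn
    linarith
  -- quantile points
  have hIcc : Set.Icc (S r0) (S r1) ⊆ S '' Set.Icc r0 r1 :=
    intermediate_value_Icc hr.le hScont
  have hb : ∀ j : Fin n, ∃ t, t ∈ Set.Icc r0 r1 ∧
      S t = (2 * ((j:ℕ):ℝ) + 1) / (2 * n) := by
    intro j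
    have hjlt : ((j:ℕ):ℝ) + 1 ≤ (n:ℝ) := by exact_mod_cast j.2
    have hmem : (2 * ((j:ℕ):ℝ) + 1) / (2 * n) ∈ Set.Icc (S r0) (S r1) := by
      rw [hS0, hS1]
      constructor
      · positivity
      · rw [div_le_one (by positivity)]
        linarith
    obtain ⟨t, ht, hst⟩ := hIcc hmem
    exact ⟨t, ht, hst⟩
  choose b hbmem hbval using hb
  -- strict monotonicity of b
  have hbmono : ∀ i j : Fin n, i < j → b i < b j := by
    intro i j hij
    have hijR : ((i:ℕ):ℝ) < ((j:ℕ):ℝ) := by exact_mod_cast hij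
    have h1 : S (b i) < S (b j) := by
      rw [hbval, hbval, div_lt_div_iff₀ (by positivity) (by positivity)]
      nlinarith
    exact (hSmono.lt_iff_lt (hbmem i) (hbmem j)).mp h1
  -- minimal gap
  set gap : Fin n → ℝ := fun i =>
    if h : (i:ℕ) + 1 < n then b ⟨(i:ℕ)+1, h⟩ - b i else 1 with hgap_def
  have hgap_pos : ∀ i, 0 < gap i := by
    intro i
    rw [hgap_def]
    by_cases h : (i:ℕ) + 1 < n
    · simp only [dif_pos h]
      have : i < (⟨(i:ℕ)+1, h⟩ : Fin n) := by
        rw [Fin.lt_def]; simp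
      linarith [hbmono i ⟨(i:ℕ)+1, h⟩ this]
    · simp only [dif_neg h]; norm_num
  have hne : (Finset.univ : Finset (Fin n)).Nonempty :=
    ⟨⟨0, hn0⟩, Finset.mem_univ _⟩
  set d : ℝ := Finset.univ.inf' hne gap with hd_def
  have hd_pos : 0 < d := by
    rw [hd_def, Finset.lt_inf'_iff]
    exact fun i _ => hgap_pos i
  have hd_le : ∀ i j : Fin n, i < j → d ≤ b j - b i := by
    intro i j hij
    have hij' : (i:ℕ) < (j:ℕ) := hij
    have h1 : (i:ℕ) + 1 < n := Nat.lt_of_le_of_lt (Nat.succ_le_of_lt hij') j.2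
    have h2 : d ≤ gap i := Finset.inf'_le _ (Finset.mem_univ i)
    have h3 : gap i = b ⟨(i:ℕ)+1, h1⟩ - b i := by rw [hgap_def]; exact dif_pos h1
    have h4 : b ⟨(i:ℕ)+1, h1⟩ ≤ b j := by
      rcases lt_or_eq_of_le (Nat.succ_le_of_lt hij') with h | h
      · exact (hbmono _ _ (by rw [Fin.lt_def]; exact h)).le
      · have : (⟨(i:ℕ)+1, h1⟩ : Fin n) = j := Fin.ext h
        rw [this]
    rw [h3] at h2
    linarith
  -- scale
  set M : ℝ := max 1 (Real.log (4 / ε)) with hM_def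
  have hM : 0 < M := lt_of_lt_of_le one_pos (le_max_left _ _)
  set τ : ℝ := d / M with hτ_def
  have hτ : 0 < τ := div_pos hd_pos hM
  have hdτ : d / τ = M := by
    rw [hτ_def]; field_simp
  have hexp : Real.exp (-(d / τ)) ≤ ε / 4 := by
    rw [hdτ]
    have h1 : Real.log (4 / ε) ≤ M := le_max_right _ _
    have h2 : Real.exp (-M) ≤ Real.exp (-Real.log (4 / ε)) :=
      Real.exp_le_exp.mpr (by linarith)
    have h3 : Real.exp (-Real.log (4 / ε)) = ε / 4 := by
      rw [Real.exp_neg, Real.exp_log (by positivity)]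
      rw [inv_div]
    linarith
  -- assemble witnesses
  refine ⟨n, hn0, fun _ => 1 / n, b, fun _ => τ, fun j => by positivity, ?_,
    hbmem, fun _ => hτ, ⟨τ, fun _ => le_refl τ⟩, ?_⟩
  · rw [Finset.sum_const, Finset.card_univ, Fintype.card_fin, nsmul_eq_mul]
    field_simp
  intro x hx
  have hxmem : x ∈ Set.Icc r0 r1 := ⟨hx.1.le, hx.2.le⟩
  have hSx0 : 0 < S x := by
    rw [← hS0]
    exact hSmono ⟨le_rfl, hr.le⟩ hxmem hx.1
  have hSx1 : S x < 1 := by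
    rw [← hS1]
    exact hSmono hxmem ⟨hr.le, le_rfl⟩ hx.2
  set y : ℝ := n * S x - 1 / 2 with hy_def
  set k : ℕ := min n ⌈y⌉₊ with hk_def
  have hkn : k ≤ n := min_le_left _ _
  -- key characterization
  have key : ∀ j : Fin n, (b j < x ↔ (j:ℕ) < k) := by
    intro j
    have h1 : b j < x ↔ S (b j) < S x := (hSmono.lt_iff_lt (hbmem j) hxmem).symm
    rw [h1, hbval]
    rw [div_lt_iff₀ (by positivity)]
    have h2 : (2 * ((j:ℕ):ℝ) + 1 < S x * (2 * n)) ↔ (((j:ℕ):ℝ) < y) := by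
      rw [hy_def]; constructor <;> intro h <;> nlinarith
    rw [h2, ← Nat.lt_ceil, hk_def]
    have := j.2
    omega
  -- step sum value
  have hk_step : (∑ j : Fin n, (if b j < x then (1:ℝ) else 0)) = k := by
    have h1 : ∀ j : Fin n, (if b j < x then (1:ℝ) else 0)
        = (if (j:ℕ) < k then (1:ℝ) else 0) := by
      intro j; exact if_congr (key j) rfl rfl
    rw [Finset.sum_congr rfl (fun j _ => h1 j)]
    rw [Fin.sum_univ_eq_sum_range (fun j => if j < k then (1:ℝ) else 0)]
    have h2 : (Finset.range n).filter (fun i => i < k) = Finset.range k := by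
      ext j; simp only [Finset.mem_filter, Finset.mem_range]; omega
    rw [Finset.sum_ite, h2]
    simp
  -- bounds on k
  have hklow : y ≤ (k:ℝ) := by
    rw [hk_def]
    have h1 : y ≤ (n:ℝ) := by rw [hy_def]; nlinarith
    have h2 : y ≤ (⌈y⌉₊:ℝ) := Nat.le_ceil y
    rcases min_cases n ⌈y⌉₊ with ⟨h, _⟩ | ⟨h, _⟩ <;> rw [h] <;> assumption
  have hkhigh : (k:ℝ) ≤ (n:ℝ) * S x + 1 / 2 := by
    by_cases h : 0 ≤ y
    · have h1 : (⌈y⌉₊:ℝ) < y + 1 := Nat.ceil_lt_add_one h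
      have h2 : (k:ℝ) ≤ (⌈y⌉₊:ℝ) := by exact_mod_cast min_le_right n ⌈y⌉₊
      rw [hy_def] at h1
      linarith
    · push_neg at h
      have h1 : ⌈y⌉₊ = 0 := Nat.ceil_eq_zero.mpr h.le
      have h2 : k = 0 := by omega
      rw [h2]
      push_cast
      nlinarith
  have hstep_err : |(k:ℝ) / n - S x| ≤ 1 / (2 * n) := by
    have h1 : (k:ℝ) / n - S x = ((k:ℝ) - n * S x) / n := by field_simp
    have h2 : |(k:ℝ) - n * S x| ≤ 1 / 2 := by
      rw [hy_def] at hklow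
      rw [abs_le]
      constructor
      · linarith [hklow]
      · linarith [hkhigh]
    rw [h1, abs_div, abs_of_pos hnR]
    have h3 : |(k:ℝ) - (n:ℝ) * S x| / (n:ℝ) ≤ (1 / 2) / (n:ℝ) := by gcongr
    have h4 : (1 / 2) / (n:ℝ) = 1 / (2 * n) := by ring
    linarith
  clear_value y k
  set E : ℝ := Real.exp (-(d / τ)) with hE_def
  have hE0 : 0 ≤ E := le_of_lt (Real.exp_pos _)
  -- per-term bound
  have hterm : ∀ j : Fin n,
      |logisticSigmoid ((x - b j) / τ) - (if b j < x then (1:ℝ) else 0)|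
        ≤ E + (if (j:ℕ) = k - 1 then (1:ℝ) else 0)
            + (if (j:ℕ) = min k (n - 1) then (1:ℝ) else 0) := by
    intro j
    have hsp := sig_pos ((x - b j) / τ)
    have hs1 := sig_lt_one ((x - b j) / τ)
    have habs1 : |logisticSigmoid ((x - b j) / τ) - (if b j < x then (1:ℝ) else 0)| ≤ 1 := by
      rw [abs_le]
      by_cases h : b j < x <;> simp only [if_pos, if_neg, h, ite_true, ite_false] <;>
        constructor <;> linarith
    by_cases hj1 : (j:ℕ) = k - 1
    · rw [if_pos hj1]
      have h3 : (0:ℝ) ≤ (if (j:ℕ) = min k (n - 1) then (1:ℝ) else 0) := by positivity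
      linarith
    by_cases hj2 : (j:ℕ) = min k (n - 1)
    · rw [if_pos hj2, if_neg hj1]
      linarith
    rw [if_neg hj1, if_neg hj2, add_zero, add_zero]
    by_cases hbj : b j < x
    · have hjk : (j:ℕ) < k := (key j).mp hbj
      have hk1 : k - 1 < n := by omega
      have hlt : j < (⟨k - 1, hk1⟩ : Fin n) := by
        rw [Fin.lt_def]; show (j:ℕ) < k - 1; omega
      have h1 : d ≤ b ⟨k - 1, hk1⟩ - b j := hd_le _ _ hlt
      have h2 : b ⟨k - 1, hk1⟩ < x := (key ⟨k - 1, hk1⟩).mpr (by show k - 1 < k; omega)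
      have h3 : d ≤ x - b j := by linarith
      rw [if_pos hbj, abs_sub_comm, abs_of_nonneg (by linarith)]
      have h4 : 1 - logisticSigmoid ((x - b j) / τ) ≤ Real.exp (-((x - b j) / τ)) :=
        one_sub_sig_le _
      have h5 : d / τ ≤ (x - b j) / τ := by gcongr
      have h6 : Real.exp (-((x - b j) / τ)) ≤ E := by
        rw [hE_def]
        exact Real.exp_le_exp.mpr (by linarith)
      linarith
    · have hjk : k ≤ (j:ℕ) := by
        by_contra h
        exact hbj ((key j).mpr (by omega))
      have hkn' : k < n := lt_of_le_of_lt hjk j.2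
      have hjk' : k < (j:ℕ) := by omega
      have hlt : (⟨k, hkn'⟩ : Fin n) < j := by
        rw [Fin.lt_def]; show k < (j:ℕ); omega
      have h1 : d ≤ b j - b ⟨k, hkn'⟩ := hd_le _ _ hlt
      have h2 : ¬ b ⟨k, hkn'⟩ < x := fun h =>
        absurd ((key ⟨k, hkn'⟩).mp h) (by show ¬ k < k; omega)
      push_neg at h2
      have h3 : d ≤ b j - x := by linarith
      rw [if_neg hbj, sub_zero, abs_of_nonneg hsp.le]
      have h4 : logisticSigmoid ((x - b j) / τ) ≤ Real.exp ((x - b j) / τ) :=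
        sig_le_exp _
      have h5 : (x - b j) / τ ≤ -(d / τ) := by
        rw [← neg_div]
        gcongr
        linarith
      have h6 : Real.exp ((x - b j) / τ) ≤ E := by
        rw [hE_def]
        exact Real.exp_le_exp.mpr h5
      linarith
  -- sums of indicators
  have hsum1 : (∑ j : Fin n, (if (j:ℕ) = k - 1 then (1:ℝ) else 0)) ≤ 1 := by
    rw [Fin.sum_univ_eq_sum_range (fun j => if j = k - 1 then (1:ℝ) else 0)]
    rw [Finset.sum_ite_eq' (Finset.range n) (k - 1) (fun _ => (1:ℝ))]
    split <;> norm_num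
  have hsum2 : (∑ j : Fin n, (if (j:ℕ) = min k (n - 1) then (1:ℝ) else 0)) ≤ 1 := by
    rw [Fin.sum_univ_eq_sum_range (fun j => if j = min k (n - 1) then (1:ℝ) else 0)]
    rw [Finset.sum_ite_eq' (Finset.range n) (min k (n - 1)) (fun _ => (1:ℝ))]
    split <;> norm_num
  -- assemble
  have hsplit : (∑ j : Fin n, 1 / (n:ℝ) * logisticSigmoid ((x - b j) / τ)) - S x
      = (∑ j : Fin n, 1 / (n:ℝ) *
          (logisticSigmoid ((x - b j) / τ) - (if b j < x then (1:ℝ) else 0)))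
        + ((k:ℝ) / n - S x) := by
    have h1 : (∑ j : Fin n, 1 / (n:ℝ) *
        (logisticSigmoid ((x - b j) / τ) - (if b j < x then (1:ℝ) else 0)))
        = (∑ j : Fin n, 1 / (n:ℝ) * logisticSigmoid ((x - b j) / τ))
          - 1 / (n:ℝ) * (k:ℝ) := by
      simp only [mul_sub]
      rw [Finset.sum_sub_distrib, ← Finset.mul_sum, ← Finset.mul_sum, hk_step]
    rw [h1]
    ring
  have habs2 : |(∑ j : Fin n, 1 / (n:ℝ) *
      (logisticSigmoid ((x - b j) / τ) - (if b j < x then (1:ℝ) else 0)))|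
      ≤ E + 2 / n := by
    calc |(∑ j : Fin n, 1 / (n:ℝ) *
        (logisticSigmoid ((x - b j) / τ) - (if b j < x then (1:ℝ) else 0)))|
        ≤ ∑ j : Fin n, |1 / (n:ℝ) *
          (logisticSigmoid ((x - b j) / τ) - (if b j < x then (1:ℝ) else 0))| :=
          Finset.abs_sum_le_sum_abs _ _
      _ ≤ ∑ j : Fin n, 1 / (n:ℝ) *
          (E + (if (j:ℕ) = k - 1 then (1:ℝ) else 0)
             + (if (j:ℕ) = min k (n - 1) then (1:ℝ) else 0)) := by
          apply Finset.sum_le_sum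
          intro j _
          rw [abs_mul, abs_of_nonneg (by positivity : (0:ℝ) ≤ 1 / (n:ℝ))]
          exact mul_le_mul_of_nonneg_left (hterm j) (by positivity)
      _ = 1 / (n:ℝ) * ((n:ℝ) * E
            + (∑ j : Fin n, (if (j:ℕ) = k - 1 then (1:ℝ) else 0))
            + (∑ j : Fin n, (if (j:ℕ) = min k (n - 1) then (1:ℝ) else 0))) := by
          rw [← Finset.mul_sum]
          congr 1
          rw [Finset.sum_add_distrib, Finset.sum_add_distrib, Finset.sum_const,
            Finset.card_univ, Fintype.card_fin, nsmul_eq_mul]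
      _ ≤ 1 / (n:ℝ) * ((n:ℝ) * E + 1 + 1) := by
          apply mul_le_mul_of_nonneg_left ?_ (by positivity)
          linarith
      _ = E + 2 / n := by field_simp; ring
  rw [hsplit]
  have hfinal := (abs_add_le _ _).trans (add_le_add habs2 hstep_err)
  have harith : 2 / (n:ℝ) + 1 / (2 * n) = 5 / (n:ℝ) / 2 := by
    field_simp
    ring
  have hEε : E ≤ ε / 4 := by rw [hE_def]; exact hexp
  linarith
end

section
/- Probability integral transform for triangular maps (Hyvärinen–Pajunen): if X is a random vector in ℝ^m with strictly positive continuous density, and F is the triangular map with F_t(x_{1:t}) = P(X_t ≤ x_t | X_{1:t-1} = x_{1:t-1}) (the conditional CDFs), then F(X) is uniformly distributed on the cube (0,1)^m with independent coordinates. -/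
open MeasureTheory Set

lemma aux_onedim (p0 : ℝ → ENNReal) (hm : Measurable p0) (hpos : ∀ a, 0 < p0 a)
    (hfin : ∫⁻ a, p0 a ≠ ⊤) {G : ℝ → ℝ}
    (hG : ∀ a, G a = ((volume.withDensity p0) (Iic a)).toReal /
        ((volume.withDensity p0) univ).toReal) :
    (volume.withDensity p0).map G =
      (∫⁻ a, p0 a) • volume.restrict (Ioo (0:ℝ) 1) := by
  set ρ := volume.withDensity p0 with hρ
  have hρuniv : ρ univ = ∫⁻ a, p0 a := by
    rw [hρ, withDensity_apply _ MeasurableSet.univ, Measure.restrict_univ]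
  haveI hfinρ : IsFiniteMeasure ρ := ⟨by rw [hρuniv]; exact hfin.lt_top⟩
  have hcne : ρ univ ≠ ⊤ := by rw [hρuniv]; exact hfin
  have hc0 : ρ univ ≠ 0 := by
    rw [hρuniv]
    have : 0 < ∫⁻ a, p0 a := by
      rw [lintegral_pos_iff_support hm]
      have : Function.support p0 = univ := by
        ext x; simp [Function.support, (hpos x).ne']
      rw [this]
      simp
    exact this.ne'
  -- the real density
  set g : ℝ → ℝ := fun x => (p0 x).toReal with hgdef
  have hgm : Measurable g := hm.ennreal_toReal
  have hgnn : ∀ x, 0 ≤ g x := fun x => ENNReal.toReal_nonneg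
  have hae : ∀ᵐ x : ℝ, p0 x < ⊤ := ae_lt_top hm hfin
  have hint : Integrable g := integrable_toReal_of_lintegral_ne_top hm.aemeasurable hfin
  have hρset : ∀ s : Set ℝ, MeasurableSet s → ρ s = ENNReal.ofReal (∫ x in s, g x) := by
    intro s hs
    rw [hρ, withDensity_apply _ hs]
    rw [integral_toReal (hm.aemeasurable.restrict) (ae_restrict_of_ae hae)]
    rw [ENNReal.ofReal_toReal]
    exact ((setLIntegral_le_lintegral s p0).trans_lt hfin.lt_top).ne
  set I : ℝ := ∫ x, g x with hIdef
  have hρunivI : ρ univ = ENNReal.ofReal I := by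
    rw [hρset univ MeasurableSet.univ, Measure.restrict_univ]
  have hInn : 0 ≤ I := integral_nonneg hgnn
  have hIpos : 0 < I := by
    rcases hInn.lt_or_eq with h | h
    · exact h
    · exact absurd (hρunivI.trans (by rw [← h]; simp)) hc0
  set H : ℝ → ℝ := fun b => ∫ x in Iic b, g x with hHdef
  have hHnn : ∀ b, 0 ≤ H b := fun b => setIntegral_nonneg measurableSet_Iic fun x _ => hgnn x
  have hρIic : ∀ b, ρ (Iic b) = ENNReal.ofReal (H b) := fun b => hρset _ measurableSet_Iic
  have hHtoReal : ∀ b, (ρ (Iic b)).toReal = H b := by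
    intro b; rw [hρIic b, ENNReal.toReal_ofReal (hHnn b)]
  have hGHI : ∀ a, G a = H a / I := by
    intro a
    rw [hG a, hHtoReal, hρunivI, ENNReal.toReal_ofReal hInn]
  -- positivity of integrals over sets of positive measure
  have hposint : ∀ s : Set ℝ, MeasurableSet s → 0 < volume s → 0 < ∫ x in s, g x := by
    intro s hs hvs
    rw [setIntegral_pos_iff_support_of_nonneg_ae
      (Filter.Eventually.of_forall fun x => hgnn x) (hint.integrableOn)]
    have hsub : s \ Function.support g ⊆ {x | p0 x = ⊤} := by
      intro x hx
      have hnx : g x = 0 := by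
        by_contra h
        exact hx.2 h
      have := hpos x
      simp only [hgdef] at hnx
      rcases ENNReal.toReal_eq_zero_iff _ |>.mp hnx with h | h
      · exact absurd h this.ne'
      · exact h
    have hnull : volume (s \ Function.support g) = 0 :=
      measure_mono_null hsub (by
        have := ae_iff.mp hae
        simpa [lt_top_iff_ne_top] using this)
    have : volume s ≤ volume (Function.support g ∩ s) := by
      calc volume s ≤ volume ((Function.support g ∩ s) ∪ (s \ Function.support g)) := by
            apply measure_mono; intro x hx
            by_cases hx2 : x ∈ Function.support g
            · exact Or.inl ⟨hx2, hx⟩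
            · exact Or.inr ⟨hx, hx2⟩
        _ ≤ volume (Function.support g ∩ s) + volume (s \ Function.support g) :=
            measure_union_le _ _
        _ = volume (Function.support g ∩ s) := by rw [hnull, add_zero]
    exact lt_of_lt_of_le hvs this
  have hIicIoc : ∀ a b : ℝ, a ≤ b → H b = H a + ∫ x in Ioc a b, g x := by
    intro a b hab
    rw [hHdef]
    simp only
    rw [← Iic_union_Ioc_eq_Iic hab,
      setIntegral_union (Iic_disjoint_Ioc le_rfl) measurableSet_Ioc
        hint.integrableOn hint.integrableOn]
  have hHsm : StrictMono H := by
    intro a b hab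
    have := hposint (Ioc a b) measurableSet_Ioc (by simp [hab])
    have h2 := hIicIoc a b hab.le
    linarith
  have hHcont : Continuous H := by
    have hHeq : ∀ b, H b = H 0 + ∫ x in (0:ℝ)..b, g x := by
      intro b
      rcases le_total 0 b with h | h
      · rw [intervalIntegral.integral_of_le h, hIicIoc 0 b h]
      · rw [intervalIntegral.integral_of_ge h, hIicIoc b 0 h]
        ring
    have : Continuous fun b => H 0 + ∫ x in (0:ℝ)..b, g x :=
      continuous_const.add
        (intervalIntegral.continuous_primitive (fun a b => hint.intervalIntegrable) 0)
    exact (funext hHeq) ▸ this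
  have hHposb : ∀ b, 0 < H b :=
    fun b => hposint _ measurableSet_Iic (by simp)
  have hHltI : ∀ b, H b < I := by
    intro b
    have hsplit : I = H b + ∫ x in Ioi b, g x := by
      rw [hIdef, hHdef]
      simp only
      rw [← setIntegral_univ, ← Iic_union_Ioi (a := b),
        setIntegral_union (Iic_disjoint_Ioi le_rfl) measurableSet_Ioi
          hint.integrableOn hint.integrableOn]
    have := hposint (Ioi b) measurableSet_Ioi (by simp)
    linarith
  have hItoReal : (ρ univ).toReal = I := by rw [hρunivI, ENNReal.toReal_ofReal hInn]
  have hHtop : Filter.Tendsto H Filter.atTop (nhds I) := by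
    have h1 := (ENNReal.tendsto_toReal hcne).comp (tendsto_measure_Iic_atTop ρ)
    have : (fun b => (ρ (Iic b)).toReal) = H := funext hHtoReal
    rwa [Function.comp_def, this, hItoReal] at h1
  have hsingleton : ∀ b : ℝ, ρ {b} = 0 := by
    intro b
    rw [hρset {b} (measurableSet_singleton b)]
    have hz : (volume : Measure ℝ).restrict {b} = 0 := by
      rw [Measure.restrict_eq_zero]; simp
    rw [hz, integral_zero_measure, ENNReal.ofReal_zero]
  have hHIci : ∀ b, H b = I - (ρ (Ici b)).toReal := by
    intro b
    have h1 : ρ (Ici b) = ρ (Ioi b) := (measure_congr (Ioi_ae_eq_Ici' (hsingleton b))).symm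
    have h2 : ρ (Ioi b) = ρ univ - ρ (Iic b) := by
      rw [← compl_Iic, measure_compl measurableSet_Iic (measure_lt_top ρ _).ne]
    rw [h1, h2, ENNReal.toReal_sub_of_le (measure_mono (subset_univ _)) hcne,
      hItoReal, hHtoReal]
    ring
  have hHbot : Filter.Tendsto H Filter.atBot (nhds 0) := by
    have h1 := (ENNReal.tendsto_toReal hcne).comp (tendsto_measure_Ici_atBot ρ)
    rw [Function.comp_def, hItoReal] at h1
    have h2 : Filter.Tendsto (fun b => I - (ρ (Ici b)).toReal) Filter.atBot (nhds (I - I)) :=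
      (tendsto_const_nhds).sub h1
    rw [sub_self] at h2
    exact h2.congr (fun b => (hHIci b).symm)
  have hGc : Continuous G := by
    have : Continuous fun a => H a / I := hHcont.div_const I
    exact (funext hGHI) ▸ this
  have hGsm : StrictMono G := by
    intro a b hab
    rw [hGHI a, hGHI b]
    exact div_lt_div_of_pos_right (hHsm hab) hIpos
  have hGm : Measurable G := hGc.measurable
  have hGpos : ∀ x, 0 < G x := fun x => by
    rw [hGHI]; exact div_pos (hHposb x) hIpos
  have hGlt1 : ∀ x, G x < 1 := fun x => by
    rw [hGHI, div_lt_one hIpos]; exact hHltI x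
  have hGtop : Filter.Tendsto G Filter.atTop (nhds 1) := by
    have h := hHtop.div_const I
    rw [div_self hIpos.ne'] at h
    exact h.congr fun b => (hGHI b).symm
  have hGbot : Filter.Tendsto G Filter.atBot (nhds 0) := by
    have h := hHbot.div_const I
    rw [zero_div] at h
    exact h.congr fun b => (hGHI b).symm
  haveI : IsFiniteMeasure (ρ.map G) :=
    ⟨by rw [Measure.map_apply hGm MeasurableSet.univ]; exact measure_lt_top ρ _⟩
  rw [← hρuniv]
  refine Measure.ext_of_Iic _ _ fun a => ?_
  rw [Measure.map_apply hGm measurableSet_Iic, Measure.smul_apply,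
    Measure.restrict_apply measurableSet_Iic, smul_eq_mul]
  rcases le_or_gt a 0 with ha0 | ha0
  · have h1 : G ⁻¹' Iic a = ∅ := by
      ext x; simp only [mem_preimage, mem_Iic, mem_empty_iff_false, iff_false, not_le]
      exact lt_of_le_of_lt ha0 (hGpos x)
    have h2 : Iic a ∩ Ioo 0 1 = ∅ := by
      ext x; simp only [mem_inter_iff, mem_Iic, mem_Ioo, mem_empty_iff_false, iff_false]
      rintro ⟨hx1, hx2, _⟩; linarith
    rw [h1, h2]; simp
  rcases le_or_gt 1 a with ha1 | ha1
  · have h1 : G ⁻¹' Iic a = univ := by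
      ext x; simp only [mem_preimage, mem_Iic, mem_univ, iff_true]
      exact le_of_lt (lt_of_lt_of_le (hGlt1 x) ha1)
    have h2 : Iic a ∩ Ioo 0 1 = Ioo 0 1 := by
      rw [inter_eq_right]
      exact fun x hx => le_trans (le_of_lt hx.2) ha1
    rw [h1, h2, Real.volume_Ioo]
    simp
  · obtain ⟨x₁, hx₁⟩ : ∃ x, G x < a := (hGbot.eventually_lt_const ha0).exists
    obtain ⟨x₂, hx₂⟩ : ∃ x, a < G x := (hGtop.eventually_const_lt ha1).exists
    have hmem : a ∈ uIcc (G x₁) (G x₂) := by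
      rw [mem_uIcc]; exact Or.inl ⟨hx₁.le, hx₂.le⟩
    obtain ⟨xa, _, hxa⟩ := intermediate_value_uIcc hGc.continuousOn hmem
    have hset : G ⁻¹' Iic a = Iic xa := by
      ext x; simp only [mem_preimage, mem_Iic]
      constructor
      · intro h
        by_contra hlt
        push_neg at hlt
        have := hGsm hlt
        rw [hxa] at this
        linarith
      · intro h
        rcases h.lt_or_eq with h' | h'
        · exact le_of_lt (hxa ▸ hGsm h')
        · rw [h', hxa]
    have h2 : Iic a ∩ Ioo 0 1 = Ioc 0 a := by
      ext x; simp only [mem_inter_iff, mem_Iic, mem_Ioo, mem_Ioc]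
      constructor
      · rintro ⟨h1, h2, h3⟩; exact ⟨h2, h1⟩
      · rintro ⟨h1, h2⟩; exact ⟨h2, h1, lt_of_le_of_lt h2 ha1⟩
    have hHxa : H xa = a * I := by
      have := hGHI xa
      rw [hxa] at this
      field_simp at this
      linarith
    rw [hset, hρIic, h2, Real.volume_Ioc, hρunivI, hHxa, sub_zero,
      ← ENNReal.ofReal_mul hInn]
    ring_nf

noncomputable def Phi (m : ℕ) (p : (Fin m → ℝ) → ℝ) (x : Fin m → ℝ) (t : Fin m) : ℝ :=
  (∫ y : {s : Fin m // t ≤ s} → ℝ,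
      if y ⟨t, le_refl t⟩ ≤ x t then p (fun s => if h : t ≤ s then y ⟨s, h⟩ else x s) else 0) /
  (∫ y : {s : Fin m // t ≤ s} → ℝ, p (fun s => if h : t ≤ s then y ⟨s, h⟩ else x s))

lemma measurable_merge {α : Type*} [MeasurableSpace α] (m : ℕ) (t : Fin m) :
    Measurable (fun z : (α × (Fin m → ℝ)) × ({s : Fin m // t ≤ s} → ℝ) =>
      (fun s : Fin m => if h : t ≤ s then z.2 ⟨s, h⟩ else z.1.2 s)) := by
  apply measurable_pi_lambda
  intro s
  by_cases h : t ≤ s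
  · simp only [h, dif_pos]
    exact (measurable_pi_apply _).comp measurable_snd
  · simp only [h, dif_neg, not_false_iff]
    exact ((measurable_pi_apply _).comp (measurable_snd.comp measurable_fst))

lemma measurable_phi_param {α : Type*} [MeasurableSpace α] (m : ℕ)
    (P : α × (Fin m → ℝ) → ℝ) (hP : Measurable P) (t : Fin m) :
    Measurable (fun z : α × (Fin m → ℝ) => Phi m (fun v => P (z.1, v)) z.2 t) := by
  unfold Phi
  have hmm := measurable_merge (α := α) m t
  have hD : Measurable (fun z : (α × (Fin m → ℝ)) × ({s : Fin m // t ≤ s} → ℝ) =>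
      P (z.1.1, fun s : Fin m => if h : t ≤ s then z.2 ⟨s, h⟩ else z.1.2 s)) :=
    hP.comp ((measurable_fst.comp measurable_fst).prodMk hmm)
  have hsetm : MeasurableSet {z : (α × (Fin m → ℝ)) × ({s : Fin m // t ≤ s} → ℝ) |
      z.2 ⟨t, le_refl t⟩ ≤ z.1.2 t} :=
    measurableSet_le (measurable_snd.eval) (measurable_fst.snd.eval)
  have hN : Measurable (fun z : (α × (Fin m → ℝ)) × ({s : Fin m // t ≤ s} → ℝ) =>
      if z.2 ⟨t, le_refl t⟩ ≤ z.1.2 t then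
        P (z.1.1, fun s : Fin m => if h : t ≤ s then z.2 ⟨s, h⟩ else z.1.2 s) else 0) :=
    Measurable.ite hsetm hD measurable_const
  have h1 : Measurable (fun z : α × (Fin m → ℝ) =>
      ∫ y : {s : Fin m // t ≤ s} → ℝ,
        if y ⟨t, le_refl t⟩ ≤ z.2 t then
          P (z.1, fun s : Fin m => if h : t ≤ s then y ⟨s, h⟩ else z.2 s) else 0) :=
    (hN.stronglyMeasurable.integral_prod_right').measurable
  have h2 : Measurable (fun z : α × (Fin m → ℝ) =>
      ∫ y : {s : Fin m // t ≤ s} → ℝ,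
        P (z.1, fun s : Fin m => if h : t ≤ s then y ⟨s, h⟩ else z.2 s)) :=
    (hD.stronglyMeasurable.integral_prod_right').measurable
  exact h1.div h2

lemma measurable_phi (m : ℕ) (p : (Fin m → ℝ) → ℝ) (hp : Measurable p) :
    Measurable (Phi m p) := by
  apply measurable_pi_lambda
  intro t
  have h := (measurable_phi_param (α := Unit) m (fun z => p z.2) (hp.comp measurable_snd) t).comp
    (measurable_prodMk_left (x := ()))
  exact h

def pitTauEquiv (n : ℕ) : Fin (n+1) ≃ {s : Fin (n+1) // (0 : Fin (n+1)) ≤ s} where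
  toFun s := ⟨s, Fin.zero_le s⟩
  invFun s := s.1
  left_inv s := rfl
  right_inv s := rfl

lemma phi_zero (n : ℕ) (p : (Fin (n+1) → ℝ) → ℝ) (x : Fin (n+1) → ℝ) :
    Phi (n+1) p x 0 =
      (∫ z : Fin (n+1) → ℝ, if z 0 ≤ x 0 then p z else 0) / (∫ z : Fin (n+1) → ℝ, p z) := by
  unfold Phi
  have hmp := volume_measurePreserving_piCongrLeft
    (fun _ : {s : Fin (n+1) // (0:Fin (n+1)) ≤ s} => ℝ) (pitTauEquiv n)
  have hemb := (MeasurableEquiv.piCongrLeft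
    (fun _ : {s : Fin (n+1) // (0:Fin (n+1)) ≤ s} => ℝ) (pitTauEquiv n)).measurableEmbedding
  have happ : ∀ (z : Fin (n+1) → ℝ) (s : Fin (n+1)) (h : (0:Fin (n+1)) ≤ s),
      (MeasurableEquiv.piCongrLeft (fun _ => ℝ) (pitTauEquiv n)) z ⟨s, h⟩ = z s := by
    intro z s h
    have : (pitTauEquiv n) s = ⟨s, h⟩ := rfl
    rw [MeasurableEquiv.coe_piCongrLeft, ← this, Equiv.piCongrLeft_apply_apply]
  rw [← hmp.integral_comp hemb (fun y : {s : Fin (n+1) // (0:Fin (n+1)) ≤ s} → ℝ =>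
        if y ⟨0, le_refl 0⟩ ≤ x 0 then
          p (fun s => if h : (0:Fin (n+1)) ≤ s then y ⟨s, h⟩ else x s) else 0),
      ← hmp.integral_comp hemb (fun y : {s : Fin (n+1) // (0:Fin (n+1)) ≤ s} → ℝ =>
        p (fun s => if h : (0:Fin (n+1)) ≤ s then y ⟨s, h⟩ else x s))]
  have harg : ∀ z : Fin (n+1) → ℝ,
      (fun s => if h : (0:Fin (n+1)) ≤ s then
        (MeasurableEquiv.piCongrLeft (fun _ => ℝ) (pitTauEquiv n)) z ⟨s, h⟩ else x s) = z := by
    intro z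
    funext s
    rw [dif_pos (Fin.zero_le s), happ]
  congr 1

lemma sigma_ne (n : ℕ) (t : Fin n) (s : {s : Fin (n+1) // t.succ ≤ s}) : s.1 ≠ 0 :=
  fun h0 => Fin.succ_ne_zero t (Fin.le_zero_iff.mp (h0 ▸ s.2))

def pitSigmaEquiv (n : ℕ) (t : Fin n) : {s : Fin n // t ≤ s} ≃ {s : Fin (n+1) // t.succ ≤ s} where
  toFun s := ⟨s.1.succ, Fin.succ_le_succ_iff.mpr s.2⟩
  invFun s := ⟨s.1.pred (sigma_ne n t s), Fin.succ_le_succ_iff.mp (by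
    rw [Fin.succ_pred]; exact s.2)⟩
  left_inv s := Subtype.ext (by simp)
  right_inv s := Subtype.ext (by simp)

lemma phi_succ (n : ℕ) (p : (Fin (n+1) → ℝ) → ℝ) (x : Fin (n+1) → ℝ) (t : Fin n) :
    Phi (n+1) p x t.succ =
      Phi n (fun v => p (Fin.cons (x 0) v)) (fun j => x j.succ) t := by
  unfold Phi
  have hmp := volume_measurePreserving_piCongrLeft
    (fun _ : {s : Fin (n+1) // t.succ ≤ s} => ℝ) (pitSigmaEquiv n t)
  have hemb := (MeasurableEquiv.piCongrLeft
    (fun _ : {s : Fin (n+1) // t.succ ≤ s} => ℝ) (pitSigmaEquiv n t)).measurableEmbedding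
  have happ : ∀ (z : {s : Fin n // t ≤ s} → ℝ) (j : Fin n) (hj : t ≤ j)
      (h : t.succ ≤ j.succ),
      (MeasurableEquiv.piCongrLeft (fun _ => ℝ) (pitSigmaEquiv n t)) z ⟨j.succ, h⟩ = z ⟨j, hj⟩ := by
    intro z j hj h
    have : (pitSigmaEquiv n t) ⟨j, hj⟩ = ⟨j.succ, h⟩ := Subtype.ext (by simp [pitSigmaEquiv])
    rw [MeasurableEquiv.coe_piCongrLeft, ← this, Equiv.piCongrLeft_apply_apply]
  rw [← hmp.integral_comp hemb (fun y : {s : Fin (n+1) // t.succ ≤ s} → ℝ =>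
        if y ⟨t.succ, le_refl t.succ⟩ ≤ x t.succ then
          p (fun s => if h : t.succ ≤ s then y ⟨s, h⟩ else x s) else 0),
      ← hmp.integral_comp hemb (fun y : {s : Fin (n+1) // t.succ ≤ s} → ℝ =>
        p (fun s => if h : t.succ ≤ s then y ⟨s, h⟩ else x s))]
  have harg : ∀ z : {s : Fin n // t ≤ s} → ℝ,
      (fun s => if h : t.succ ≤ s then
        (MeasurableEquiv.piCongrLeft (fun _ => ℝ) (pitSigmaEquiv n t)) z ⟨s, h⟩ else x s) =
      Fin.cons (x 0) (fun j => if h : t ≤ j then z ⟨j, h⟩ else x j.succ) := by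
    intro z
    funext s
    induction s using Fin.cases with
    | zero =>
      rw [dif_neg (fun h0 => Fin.succ_ne_zero t (Fin.le_zero_iff.mp h0)), Fin.cons_zero]
    | succ j =>
      rw [Fin.cons_succ]
      by_cases h : t ≤ j
      · rw [dif_pos (Fin.succ_le_succ_iff.mpr h), dif_pos h, happ]
      · rw [dif_neg (fun h2 => h (Fin.succ_le_succ_iff.mp h2)), dif_neg h]
  congr 1
  · refine integral_congr_ae (Filter.Eventually.of_forall fun z => ?_)
    beta_reduce
    rw [harg, happ]
  · refine integral_congr_ae (Filter.Eventually.of_forall fun z => ?_)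
    beta_reduce
    rw [harg]

lemma meas_eq_of_subsingleton {α : Type*} [MeasurableSpace α] [Subsingleton α]
    (μ₁ μ₂ : Measure α) (h : μ₁ univ = μ₂ univ) : μ₁ = μ₂ := by
  ext s _
  rcases s.eq_empty_or_nonempty with rfl | ⟨x, hx⟩
  · simp
  · have hs : s = univ := eq_univ_of_forall (fun y => Subsingleton.elim x y ▸ hx)
    rw [hs, h]

lemma aux_main : ∀ (m : ℕ) (p : (Fin m → ℝ) → ℝ), Continuous p → (∀ x, 0 < p x) →
    (∫⁻ x, ENNReal.ofReal (p x)) ≠ ⊤ →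
    (volume.withDensity fun x => ENNReal.ofReal (p x)).map (Phi m p) =
      (∫⁻ x, ENNReal.ofReal (p x)) • volume.restrict (univ.pi fun _ : Fin m => Ioo (0:ℝ) 1) := by
  intro m
  induction m with
  | zero =>
    intro p hpc hpp hfin
    have hcube : (univ.pi fun _ : Fin 0 => Ioo (0:ℝ) 1) = univ := by
      ext x; simp
    rw [hcube, Measure.restrict_univ]
    refine meas_eq_of_subsingleton _ _ ?_
    rw [Measure.map_apply Subsingleton.measurable MeasurableSet.univ, preimage_univ,
      withDensity_apply _ MeasurableSet.univ, Measure.restrict_univ, Measure.smul_apply,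
      smul_eq_mul]
    have huniv : (volume : Measure (Fin 0 → ℝ)) univ = 1 := by
      rw [MeasureTheory.volume_pi, Measure.pi_univ]
      simp
    rw [huniv, mul_one]
  | succ n IH =>
    intro p hpc hpp hfin
    set w : (Fin (n+1) → ℝ) → ENNReal := fun x => ENNReal.ofReal (p x) with hw
    have hwm : Measurable w := ENNReal.measurable_ofReal.comp hpc.measurable
    set ν := volume.withDensity w with hν
    set e := MeasurableEquiv.piFinSuccAbove (fun _ : Fin (n+1) => ℝ) 0 with he
    have hemp : MeasurePreserving e volume volume := volume_preserving_piFinSuccAbove _ 0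
    have hesymm : ∀ z : ℝ × (Fin n → ℝ), e.symm z = Fin.cons z.1 z.2 := by
      intro z
      rw [he, MeasurableEquiv.piFinSuccAbove_symm_apply]
      simp [Fin.insertNthEquiv, Fin.insertNth_zero]
    have heapp : ∀ x : Fin (n+1) → ℝ, e x = (x 0, fun j => x j.succ) := by
      intro x
      rw [he, MeasurableEquiv.piFinSuccAbove_apply]
      simp [Fin.insertNthEquiv, Fin.zero_succAbove]
      rfl
    set q : ℝ → (Fin n → ℝ) → ℝ := fun a v => p (Fin.cons a v) with hq
    have hconsc : Continuous (fun z : ℝ × (Fin n → ℝ) => (Fin.cons z.1 z.2 : Fin (n+1) → ℝ)) := by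
      apply continuous_pi
      intro i
      induction i using Fin.cases with
      | zero => simpa using continuous_fst
      | succ j => simpa using (show Continuous fun a : ℝ × (Fin n → ℝ) => a.2 j from (continuous_apply j).comp continuous_snd)
    have hqc : Continuous (fun z : ℝ × (Fin n → ℝ) => q z.1 z.2) := hpc.comp hconsc
    set p0 : ℝ → ENNReal := fun a => ∫⁻ v, ENNReal.ofReal (q a v) with hp0
    have hp0m : Measurable p0 :=
      Measurable.lintegral_prod_right' (ENNReal.measurable_ofReal.comp hqc.measurable)
    have hp0pos : ∀ a, 0 < p0 a := by
      intro a
      rw [hp0]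
      simp only
      have hm' : Measurable fun v : Fin n → ℝ => ENNReal.ofReal (q a v) :=
        ENNReal.measurable_ofReal.comp (hqc.comp (Continuous.prodMk_right a)).measurable
      rw [lintegral_pos_iff_support hm']
      have hsupp : Function.support (fun v => ENNReal.ofReal (q a v)) = univ := by
        ext v
        simp only [Function.mem_support, mem_univ, iff_true]
        exact (ENNReal.ofReal_pos.mpr (hpp _)).ne'
      rw [hsupp]
      exact isOpen_univ.measure_pos _ univ_nonempty
    have hwesymm : ∀ z : ℝ × (Fin n → ℝ), w (e.symm z) = ENNReal.ofReal (q z.1 z.2) := by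
      intro z
      rw [hesymm]
    have hqem : Measurable fun z : ℝ × (Fin n → ℝ) => ENNReal.ofReal (q z.1 z.2) :=
      ENNReal.measurable_ofReal.comp hqc.measurable
    have hfub : ∫⁻ x, w x = ∫⁻ a, p0 a := by
      have h1 := (hemp.symm e).lintegral_comp hwm
      rw [← h1]
      simp_rw [hwesymm]
      rw [Measure.volume_eq_prod, lintegral_prod _ hqem.aemeasurable]
    have hfin0 : ∫⁻ a, p0 a ≠ ⊤ := hfub ▸ hfin
    set ρ0 := volume.withDensity p0 with hρ0
    set G : ℝ → ℝ := fun a => (ρ0 (Iic a)).toReal / (ρ0 univ).toReal with hG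
    have honedim : ρ0.map G = (∫⁻ a, p0 a) • volume.restrict (Ioo (0:ℝ) 1) :=
      aux_onedim p0 hp0m hp0pos hfin0 (fun a => rfl)
    have hρ0fin : ∀ s : Set ℝ, ρ0 s ≠ ⊤ := by
      intro s
      refine ((measure_mono (subset_univ s)).trans_lt ?_).ne
      rw [hρ0, withDensity_apply _ MeasurableSet.univ, Measure.restrict_univ]
      exact hfin0.lt_top
    have hGmono : Monotone G := by
      intro a b hab
      rw [hG]
      simp only
      have h1 : (ρ0 (Iic a)).toReal ≤ (ρ0 (Iic b)).toReal :=
        ENNReal.toReal_mono (hρ0fin _) (measure_mono (Iic_subset_Iic.mpr hab))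
      have h2 : (0:ℝ) ≤ (ρ0 univ).toReal := ENNReal.toReal_nonneg
      rw [div_eq_mul_inv, div_eq_mul_inv]
      exact mul_le_mul_of_nonneg_right h1 (inv_nonneg.mpr h2)
    have hGm : Measurable G := hGmono.measurable
    -- transfer of set-lintegrals along e
    have hkey : ∀ c : ℝ, ν {z : Fin (n+1) → ℝ | z 0 ≤ c} = ρ0 (Iic c) := by
      intro c
      have hSm : MeasurableSet {z : Fin (n+1) → ℝ | z 0 ≤ c} :=
        measurableSet_le (measurable_pi_apply 0) measurable_const
      rw [hν, withDensity_apply _ hSm]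
      have h2 : (volume : Measure (Fin (n+1) → ℝ)) = Measure.map e.symm volume :=
        ((hemp.symm e).map_eq).symm
      rw [h2, setLIntegral_map hSm hwm e.symm.measurable]
      have hpre : e.symm ⁻¹' {z : Fin (n+1) → ℝ | z 0 ≤ c}
          = (Iic c) ×ˢ (univ : Set (Fin n → ℝ)) := by
        ext z
        simp [hesymm z]
      rw [hpre]
      simp_rw [hwesymm]
      rw [Measure.volume_eq_prod, ← Measure.prod_restrict, Measure.restrict_univ,
        lintegral_prod _ hqem.aemeasurable, hρ0, withDensity_apply _ measurableSet_Iic]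
    have hkeyuniv : ν univ = ρ0 univ := by
      rw [hν, hρ0, withDensity_apply _ MeasurableSet.univ,
        withDensity_apply _ MeasurableSet.univ, Measure.restrict_univ, Measure.restrict_univ]
      exact hfub
    have hclaim1 : ∀ x : Fin (n+1) → ℝ, Phi (n+1) p x 0 = G (x 0) := by
      intro x
      rw [phi_zero n p x, hG]
      have hSm : MeasurableSet {z : Fin (n+1) → ℝ | z 0 ≤ x 0} :=
        measurableSet_le (measurable_pi_apply 0) measurable_const
      have hnum : ∫ z : Fin (n+1) → ℝ, (if z 0 ≤ x 0 then p z else 0)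
          = (ν {z : Fin (n+1) → ℝ | z 0 ≤ x 0}).toReal := by
        rw [integral_eq_lintegral_of_nonneg_ae
          (Filter.Eventually.of_forall fun z => by
            by_cases h : z 0 ≤ x 0
            · simpa [h] using (hpp z).le
            · simp [h])
          (Measurable.ite hSm hpc.measurable measurable_const).aestronglyMeasurable]
        congr 1
        rw [hν, withDensity_apply _ hSm, ← lintegral_indicator hSm]
        congr 1
        funext z
        by_cases h : z 0 ≤ x 0
        · have hz : z ∈ {z : Fin (n+1) → ℝ | z 0 ≤ x 0} := h
          rw [indicator_of_mem hz, if_pos h]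
        · have hz : z ∉ {z : Fin (n+1) → ℝ | z 0 ≤ x 0} := h
          rw [indicator_of_notMem hz, if_neg h, ENNReal.ofReal_zero]
      have hden : ∫ z : Fin (n+1) → ℝ, p z = (ν univ).toReal := by
        rw [integral_eq_lintegral_of_nonneg_ae
          (Filter.Eventually.of_forall fun z => (hpp z).le)
          hpc.measurable.aestronglyMeasurable]
        congr 1
        rw [hν, withDensity_apply _ MeasurableSet.univ, Measure.restrict_univ]
      rw [hnum, hden, hkey, hkeyuniv]
    set Ψ : ℝ × (Fin n → ℝ) → ℝ × (Fin n → ℝ) := fun z => (G z.1, Phi n (q z.1) z.2) with hΨ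
    have hΨm : Measurable Ψ := by
      refine Measurable.prod (hGm.comp measurable_fst) ?_
      refine measurable_pi_lambda _ fun t => ?_
      exact measurable_phi_param n (fun z => q z.1 z.2) hqc.measurable t
    have hconj : ∀ x : Fin (n+1) → ℝ, Phi (n+1) p x = e.symm (Ψ (e x)) := by
      intro x
      rw [heapp, hΨ]
      simp only
      rw [hesymm]
      simp only
      funext i
      induction i using Fin.cases with
      | zero => rw [Fin.cons_zero]; exact hclaim1 x
      | succ j => rw [Fin.cons_succ]; exact phi_succ n p x j
    set D := (volume : Measure (ℝ × (Fin n → ℝ))).withDensity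
      (fun z => ENNReal.ofReal (q z.1 z.2)) with hD
    have hDuniv : D univ = ∫⁻ a, p0 a := by
      rw [hD, withDensity_apply _ MeasurableSet.univ, Measure.restrict_univ,
        Measure.volume_eq_prod, lintegral_prod _ hqem.aemeasurable]
    haveI hDfinI : IsFiniteMeasure D := ⟨by rw [hDuniv]; exact hfin0.lt_top⟩
    have hmapeq : ν.map e = D := by
      refine Measure.ext fun s hs => ?_
      rw [Measure.map_apply e.measurable hs, hν, withDensity_apply _ (e.measurable hs),
        hD, withDensity_apply _ hs]
      have h2 : (volume : Measure (Fin (n+1) → ℝ)) = Measure.map e.symm volume :=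
        ((hemp.symm e).map_eq).symm
      rw [h2, setLIntegral_map (e.measurable hs) hwm e.symm.measurable]
      have hpre : e.symm ⁻¹' (e ⁻¹' s) = s := by
        ext z
        simp
      rw [hpre]
      simp_rw [hwesymm]
    set cubeN : Set (Fin n → ℝ) := univ.pi fun _ : Fin n => Ioo (0:ℝ) 1 with hcN
    have hcNm : MeasurableSet cubeN := MeasurableSet.univ_pi fun _ => measurableSet_Ioo
    have hcNvol : (volume : Measure (Fin n → ℝ)) cubeN = 1 := by
      rw [hcN, volume_pi_pi]
      simp
    have hcore : D.map Ψ = (∫⁻ a, p0 a) •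
        (volume : Measure (ℝ × (Fin n → ℝ))).restrict ((Ioo (0:ℝ) 1) ×ˢ cubeN) := by
      haveI : IsFiniteMeasure (D.map Ψ) :=
        ⟨by rw [Measure.map_apply hΨm MeasurableSet.univ, preimage_univ]
            exact measure_lt_top _ _⟩
      refine ext_of_generate_finite _ generateFrom_prod.symm isPiSystem_prod (fun s hs => ?_) ?_
      · obtain ⟨A, hA, B, hB, rfl⟩ := hs
        have hA' : MeasurableSet A := hA
        have hB' : MeasurableSet B := hB
        have hABm : MeasurableSet (A ×ˢ B) := hA'.prod hB'
        rw [Measure.map_apply hΨm hABm, hD, withDensity_apply _ (hΨm hABm),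
          ← lintegral_indicator (hΨm hABm), Measure.volume_eq_prod,
          lintegral_prod _ (hqem.indicator (hΨm hABm)).aemeasurable]
        have hinner : ∀ᵐ a : ℝ, (∫⁻ v, (Ψ ⁻¹' (A ×ˢ B)).indicator
              (fun z : ℝ × (Fin n → ℝ) => ENNReal.ofReal (q z.1 z.2)) (a, v))
            = (G ⁻¹' A).indicator p0 a * volume (B ∩ cubeN) := by
          filter_upwards [ae_lt_top hp0m hfin0] with a ha
          by_cases hGa : G a ∈ A
          · have hind : ∀ v, (Ψ ⁻¹' (A ×ˢ B)).indicator
                (fun z : ℝ × (Fin n → ℝ) => ENNReal.ofReal (q z.1 z.2)) (a, v)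
                = ((Phi n (q a)) ⁻¹' B).indicator (fun v => ENNReal.ofReal (q a v)) v := by
              intro v
              by_cases hv : Phi n (q a) v ∈ B
              · have h1 : (a, v) ∈ Ψ ⁻¹' (A ×ˢ B) := by
                  simp only [mem_preimage, hΨ, mem_prod]
                  exact ⟨hGa, hv⟩
                rw [indicator_of_mem h1, indicator_of_mem (show v ∈ (Phi n (q a)) ⁻¹' B from hv)]
              · have h1 : (a, v) ∉ Ψ ⁻¹' (A ×ˢ B) := by
                  simp only [mem_preimage, hΨ, mem_prod]
                  exact fun hc => hv hc.2
                rw [indicator_of_notMem h1, indicator_of_notMem (show v ∉ (Phi n (q a)) ⁻¹' B from hv)]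
            simp_rw [hind]
            have hphiqa : Measurable (Phi n (q a)) :=
              measurable_phi n (q a) (hqc.comp (Continuous.prodMk_right a)).measurable
            rw [lintegral_indicator (hphiqa hB'), ← withDensity_apply _ (hphiqa hB'),
              ← Measure.map_apply hphiqa hB',
              IH (q a) (hpc.comp (hconsc.comp (Continuous.prodMk_right a))) (fun v => hpp _) ha.ne,
              Measure.smul_apply, Measure.restrict_apply hB', smul_eq_mul,
              indicator_of_mem (show a ∈ G ⁻¹' A from hGa)]
          · have hind : ∀ v, (Ψ ⁻¹' (A ×ˢ B)).indicator
                (fun z : ℝ × (Fin n → ℝ) => ENNReal.ofReal (q z.1 z.2)) (a, v) = 0 := by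
              intro v
              refine indicator_of_notMem ?_ _
              simp only [mem_preimage, hΨ, mem_prod]
              exact fun hc => hGa hc.1
            simp_rw [hind]
            rw [lintegral_zero, indicator_of_notMem (show a ∉ G ⁻¹' A from hGa), zero_mul]
        rw [lintegral_congr_ae hinner,
          lintegral_mul_const _ (hp0m.indicator (hGm hA')),
          lintegral_indicator (hGm hA'), ← withDensity_apply _ (hGm hA'), ← hρ0,
          ← Measure.map_apply hGm hA', honedim,
          Measure.smul_apply, Measure.restrict_apply hA', smul_eq_mul,
          Measure.smul_apply, Measure.restrict_apply hABm, smul_eq_mul,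
          prod_inter_prod, Measure.prod_prod]
        ring
      · rw [Measure.map_apply hΨm MeasurableSet.univ, preimage_univ, hDuniv,
          Measure.smul_apply, Measure.restrict_apply MeasurableSet.univ, univ_inter,
          Measure.volume_eq_prod, Measure.prod_prod, Real.volume_Ioo, hcNvol]
        simp
    -- final assembly
    have hcube1 : MeasurableSet (univ.pi fun _ : Fin (n+1) => Ioo (0:ℝ) 1) :=
      MeasurableSet.univ_pi fun _ => measurableSet_Ioo
    have hR : e.symm ⁻¹' (univ.pi fun _ : Fin (n+1) => Ioo (0:ℝ) 1) = (Ioo (0:ℝ) 1) ×ˢ cubeN := by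
      ext z
      simp only [mem_preimage, hesymm, mem_pi, mem_univ, true_implies, mem_prod, hcN]
      constructor
      · intro h
        refine ⟨by simpa using h 0, fun j => by simpa using h j.succ⟩
      · rintro ⟨h1, h2⟩ i
        induction i using Fin.cases with
        | zero => simpa using h1
        | succ j => simpa using h2 j
    have hrestr : ((volume : Measure (ℝ × (Fin n → ℝ))).restrict ((Ioo (0:ℝ) 1) ×ˢ cubeN)).map
        e.symm = volume.restrict (univ.pi fun _ : Fin (n+1) => Ioo (0:ℝ) 1) := by
      rw [← hR, ← Measure.restrict_map e.symm.measurable hcube1, (hemp.symm e).map_eq]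
    have hfinal : ν.map (Phi (n+1) p) = ((ν.map e).map Ψ).map e.symm := by
      rw [Measure.map_map hΨm e.measurable,
        Measure.map_map e.symm.measurable (hΨm.comp e.measurable)]
      congr 1
      funext x
      exact hconj x
    rw [hfinal, hmapeq, hcore, Measure.map_smul, hrestr, hfub]

/-- Probability integral transform for triangular maps (Hyvärinen–Pajunen):
if `X` has a strictly positive continuous density `p` on ℝ^m and `F` is the
triangular map of conditional CDFs (expressed as ratios of integrals of the
joint density), then `F(X)` is uniformly distributed on the cube `(0,1)^m`. -/
theorem stmt_13 (m : ℕ) {Ω : Type*} [MeasurableSpace Ω]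
    (μ : Measure Ω) [IsProbabilityMeasure μ]
    (X : Ω → (Fin m → ℝ)) (hX : Measurable X)
    (p : (Fin m → ℝ) → ℝ) (hpcont : Continuous p) (hppos : ∀ x, 0 < p x)
    (hXlaw : μ.map X = volume.withDensity (fun x => ENNReal.ofReal (p x)))
    (F : (Fin m → ℝ) → (Fin m → ℝ))
    (hF : ∀ (t : Fin m) (x : Fin m → ℝ),
      F x t =
        (∫ y : {s : Fin m // t ≤ s} → ℝ,
            if y ⟨t, le_refl t⟩ ≤ x t then
              p (fun s => if h : t ≤ s then y ⟨s, h⟩ else x s) else 0) /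
        (∫ y : {s : Fin m // t ≤ s} → ℝ,
            p (fun s => if h : t ≤ s then y ⟨s, h⟩ else x s))) :
    μ.map (fun ω => F (X ω)) =
      volume.restrict (Set.univ.pi fun _ : Fin m => Set.Ioo (0 : ℝ) 1) := by
  have hpm : Measurable p := hpcont.measurable
  have hPhim : Measurable (Phi m p) := measurable_phi m p hpm
  have hFeq : F = Phi m p := by
    funext x t
    rw [hF t x]
    rfl
  haveI : IsProbabilityMeasure (μ.map X) := Measure.isProbabilityMeasure_map hX.aemeasurable
  have hone : ∫⁻ x, ENNReal.ofReal (p x) = 1 := by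
    have h1 : (μ.map X) univ = 1 := measure_univ
    rw [hXlaw, withDensity_apply _ MeasurableSet.univ, Measure.restrict_univ] at h1
    exact h1
  have hmain := aux_main m p hpcont hppos (by rw [hone]; exact ENNReal.one_ne_top)
  have hcomp : (fun ω => F (X ω)) = (Phi m p) ∘ X := by
    funext ω
    rw [hFeq]
    rfl
  rw [hcomp, ← Measure.map_map hPhim hX, hXlaw, hmain, hone, one_smul]
end
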